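/- Let P be a finite poset and Q its split. Then the fractional 2-dimension of P is at most the fractional 2-dimension of Q. Consequently, if P has maximum outdegree υ (every element is strictly below at most υ others), then the fractional 2-dimension of P is at most e(υ + 2). -/

import Mathlib

open Classical Finset Real
open scoped Classical

noncomputable section

/-- A monotone partial function from `P` to the `t`-element chain,
encoded as a function into `Option (Fin t)` (`none` = outside the domain). -/
def MonotonePartial {P : Type*} [PartialOrder P] {t : ℕ} (f : P → Option (Fin t)) : Prop :=
  ∀ ⦃x y : P⦄, x ≤ y → ∀ ⦃a b : Fin t⦄, f x = some a → f y = some b → a ≤ b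

/-- `f` separates the pair `(x, y)`: both are in the domain and `f x < f y`. -/
def Separates {P : Type*} {t : ℕ} (f : P → Option (Fin t)) (x y : P) : Prop :=
  ∃ a b : Fin t, f x = some a ∧ f y = some b ∧ a < b

/-- A local `t`-realiser: a set of monotone partial functions into the `t`-chain
separating every pair `x ≱ y`. -/
def IsLocalRealiser {P : Type*} [PartialOrder P] {t : ℕ}
    (L : Finset (P → Option (Fin t))) : Prop :=
  (∀ f ∈ L, MonotonePartial f) ∧ ∀ x y : P, ¬ y ≤ x → ∃ f ∈ L, Separates f x y

/-- The multiplicity of `x` in `L`: the number of members of `L` whose domain contains `x`. -/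
def mult {P : Type*} {t : ℕ} (L : Finset (P → Option (Fin t))) (x : P) : ℕ :=
  (L.filter fun f => (f x).isSome).card

/-- The local `t`-dimension: minimal possible maximum multiplicity of a local `t`-realiser. -/
def ltdim (t : ℕ) (P : Type*) [PartialOrder P] : ℕ :=
  sInf {d | ∃ L : Finset (P → Option (Fin t)), IsLocalRealiser L ∧ ∀ x, mult L x ≤ d}

/-- The fractional `t`-dimension: minimal total weight of a nonnegative weighting of
monotone total functions `P → Fin t` separating every pair `x ≱ y` with weight at least 1. -/
def ftdim (t : ℕ) (P : Type*) [PartialOrder P] [Fintype P] [DecidableEq P] : ℝ :=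
  sInf {s : ℝ | ∃ w : (P → Fin t) → ℝ,
    (∀ f, 0 ≤ w f) ∧ (∀ f, ¬ Monotone f → w f = 0) ∧
    (∀ x y : P, ¬ y ≤ x → 1 ≤ ∑ f : P → Fin t, if f x < f y then w f else 0) ∧
    s = ∑ f : P → Fin t, w f}

/-- The fractional local `t`-dimension: minimal possible maximum (over points `x`) of the
total weight of monotone partial functions whose domain contains `x`, over nonnegative
weightings of monotone partial functions separating every pair `x ≱ y` with weight ≥ 1. -/
def fltdim (t : ℕ) (P : Type*) [PartialOrder P] [Fintype P] [DecidableEq P] : ℝ :=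
  sInf {s : ℝ | ∃ w : (P → Option (Fin t)) → ℝ,
    (∀ f, 0 ≤ w f) ∧ (∀ f, ¬ MonotonePartial f → w f = 0) ∧
    (∀ x y : P, ¬ y ≤ x →
      1 ≤ ∑ f : P → Option (Fin t), if Separates f x y then w f else 0) ∧
    ∀ x : P, (∑ f : P → Option (Fin t), if (f x).isSome then w f else 0) ≤ s}

/-- The split of a poset `P`: minimal copies `inl x = x'` and maximal copies `inr x = x''`,
with `x' ≤ y''` iff `x ≤ y` in `P`. -/
def Split (P : Type*) := P ⊕ P

instance {P : Type*} [DecidableEq P] : DecidableEq (Split P) :=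
  inferInstanceAs (DecidableEq (P ⊕ P))
instance {P : Type*} [Fintype P] : Fintype (Split P) :=
  inferInstanceAs (Fintype (P ⊕ P))
instance {P : Type*} [PartialOrder P] : PartialOrder (Split P) where
  le a b :=
    Sum.elim (fun x => Sum.elim (fun y => x = y) (fun y => x ≤ y) b)
      (fun x => Sum.elim (fun _ => False) (fun y => x = y) b) a
  le_refl a := by cases a <;> simp
  le_trans a b c h1 h2 := by
    cases a <;> cases b <;> cases c <;> simp_all
  le_antisymm a b h1 h2 := by
    cases a <;> cases b <;> simp_all <;> cases h1 <;> rfl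


lemma fin2_lt_iff : ∀ a b : Fin 2, a < b ↔ a = 0 ∧ b = 1 := by decide

lemma ftdim_bddBelow (P : Type*) [PartialOrder P] [Fintype P] [DecidableEq P] :
    BddBelow {s : ℝ | ∃ w : (P → Fin 2) → ℝ,
      (∀ f, 0 ≤ w f) ∧ (∀ f, ¬ Monotone f → w f = 0) ∧
      (∀ x y : P, ¬ y ≤ x → 1 ≤ ∑ f : P → Fin 2, if f x < f y then w f else 0) ∧
      s = ∑ f : P → Fin 2, w f} := by
  refine ⟨0, ?_⟩
  rintro s ⟨w, hw0, -, -, rfl⟩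
  exact Finset.sum_nonneg fun f _ => hw0 f

lemma sum_transfer {α β : Type*} [Fintype α] [Fintype β] [DecidableEq β]
    (e : α → β) (c : α → ℝ) (φ : β → ℝ) :
    ∑ g : β, φ g * (∑ a : α, if e a = g then c a else 0) = ∑ a : α, φ (e a) * c a := by
  simp_rw [Finset.mul_sum, mul_ite, mul_zero]
  rw [Finset.sum_comm]
  simp [Finset.sum_ite_eq]

lemma sum_powerset_pow {α : Type*} [DecidableEq α] (A : Finset α) (p q : ℝ) :
    ∑ S ∈ A.powerset, p ^ S.card * q ^ (A.card - S.card) = (p + q) ^ A.card := by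
  have h := Finset.prod_add (fun _ : α => p) (fun _ : α => q) A
  simp only [Finset.prod_const] at h
  have h2 : ∑ S ∈ A.powerset, p ^ S.card * q ^ (A.card - S.card)
      = ∑ t ∈ A.powerset, p ^ t.card * q ^ (A \ t).card :=
    Finset.sum_congr rfl fun t ht => by
      rw [Finset.card_sdiff_of_subset (Finset.mem_powerset.1 ht)]
  rw [h2, ← h]

lemma feasible (Q : Type*) [PartialOrder Q] [Fintype Q] [DecidableEq Q] (υ : ℕ)
    (hdeg : ∀ x : Q, ((Finset.univ : Finset Q).filter (fun y => x < y)).card ≤ υ) :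
    ∃ w : (Q → Fin 2) → ℝ,
      (∀ f, 0 ≤ w f) ∧ (∀ f, ¬ Monotone f → w f = 0) ∧
      (∀ x y : Q, ¬ y ≤ x → 1 ≤ ∑ f : Q → Fin 2, if f x < f y then w f else 0) ∧
      ∑ f : Q → Fin 2, w f = ((υ : ℝ) + 2) * (1 + 1 / ((υ : ℝ) + 1)) ^ (υ + 1) := by
  have h1 : ((υ : ℝ) + 1) ≠ 0 := by positivity
  have h2 : ((υ : ℝ) + 2) ≠ 0 := by positivity
  set p : ℝ := ((υ : ℝ) + 2)⁻¹ with hpdef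
  have hp : 0 < p := by positivity
  set q : ℝ := 1 - p with hqdef
  have hqval : q = ((υ : ℝ) + 1) / ((υ : ℝ) + 2) := by
    rw [hqdef, hpdef]; field_simp; ring
  have hq : 0 < q := by rw [hqval]; positivity
  have hq1 : q ≤ 1 := by rw [hqdef]; simp; positivity
  have hpq : p + q = 1 := by rw [hqdef]; ring
  set T : ℝ := ((υ : ℝ) + 2) * (1 + 1 / ((υ : ℝ) + 1)) ^ (υ + 1) with hTdef
  have hT : 0 < T := by rw [hTdef]; positivity
  have hTpq : T * (p * q ^ (υ + 1)) = 1 := by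
    rw [hTdef, hqval, hpdef, div_pow]
    have h3 : (1 + 1 / ((υ : ℝ) + 1)) = ((υ : ℝ) + 2) / ((υ : ℝ) + 1) := by
      field_simp; ring
    rw [h3, div_pow]
    have h4 : ((υ : ℝ) + 1) ^ (υ + 1) ≠ 0 := by positivity
    have h5 : ((υ : ℝ) + 2) ^ (υ + 1) ≠ 0 := by positivity
    field_simp
    try ring
  set F : Finset Q → (Q → Fin 2) := fun S x => if ∀ s ∈ S, ¬ x ≤ s then 1 else 0 with hF
  have hFmono : ∀ S, Monotone (F S) := by
    intro S a b hab
    simp only [hF]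
    split_ifs with ha hb
    · exact le_refl _
    · exfalso
      push_neg at hb
      obtain ⟨s, hs, hbs⟩ := hb
      exact ha s hs (hab.trans hbs)
    · exact Fin.zero_le _
    · exact Fin.zero_le _
  set μ : Finset Q → ℝ := fun S => p ^ S.card * q ^ (Fintype.card Q - S.card) with hμ
  have hμ0 : ∀ S, 0 ≤ μ S := fun S => by rw [hμ]; positivity
  have hμtot : ∑ S : Finset Q, μ S = 1 := by
    rw [← Finset.powerset_univ, hμ]
    have h6 := sum_powerset_pow (Finset.univ : Finset Q) p q
    rw [Finset.card_univ] at h6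
    rw [h6, hpq, one_pow]
  refine ⟨fun g => T * ∑ S : Finset Q, if F S = g then μ S else 0, ?_, ?_, ?_, ?_⟩
  · intro f
    apply mul_nonneg hT.le
    apply Finset.sum_nonneg
    intro S _
    split_ifs
    · exact hμ0 S
    · exact le_refl 0
  · intro f hf
    rw [mul_eq_zero]
    right
    apply Finset.sum_eq_zero
    intro S _
    rw [if_neg]
    intro hFS
    exact hf (hFS ▸ hFmono S)
  · intro x y hxy
    have key : (∑ f : Q → Fin 2, if f x < f y then
        (T * ∑ S : Finset Q, if F S = f then μ S else 0) else 0)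
        = ∑ S : Finset Q, (if F S x < F S y then T else 0) * μ S := by
      have h7 := sum_transfer (α := Finset Q) (β := Q → Fin 2) F μ
        (fun g => if g x < g y then T else 0)
      rw [← h7]
      apply Finset.sum_congr rfl
      intro g _
      rw [ite_mul, zero_mul]
    rw [key]
    set U : Finset Q := Finset.univ.filter (fun z => y ≤ z) with hU
    have hUcard : U.card ≤ υ + 1 := by
      have hsub : U ⊆ insert y (Finset.univ.filter (fun z => y < z)) := by
        intro z hz
        rw [hU, Finset.mem_filter] at hz
        rcases eq_or_lt_of_le hz.2 with h | h
        · exact Finset.mem_insert.2 (Or.inl h.symm)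
        · exact Finset.mem_insert.2 (Or.inr (Finset.mem_filter.2 ⟨Finset.mem_univ _, h⟩))
      calc U.card ≤ _ := Finset.card_le_card hsub
        _ ≤ _ + 1 := Finset.card_insert_le _ _
        _ ≤ υ + 1 := by have := hdeg y; omega
    have hxU : x ∉ U := by
      rw [hU, Finset.mem_filter]
      tauto
    have hRcard : (Finset.univ \ insert x U).card + 1 + U.card = Fintype.card Q := by
      have hle : (insert x U).card ≤ Fintype.card Q := by
        rw [← Finset.card_univ]
        exact Finset.card_le_card (Finset.subset_univ _)
      rw [Finset.card_sdiff_of_subset (Finset.subset_univ _), Finset.card_univ]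
      rw [Finset.card_insert_of_notMem hxU] at hle ⊢
      omega
    set R : Finset Q := Finset.univ \ insert x U with hR
    have hxR : x ∉ R := by simp [hR]
    set good : Finset (Finset Q) := Finset.univ.filter (fun S => x ∈ S ∧ Disjoint S U)
      with hgood
    have hgoodsep : ∀ S ∈ good, F S x < F S y := by
      intro S hS
      rw [hgood, Finset.mem_filter] at hS
      obtain ⟨_, hxS, hdisj⟩ := hS
      have hFx : F S x = 0 := by
        simp only [hF]
        rw [if_neg]
        push_neg
        exact ⟨x, hxS, le_refl x⟩
      have hFy : F S y = 1 := by
        simp only [hF]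
        rw [if_pos]
        intro s hs hys
        have hsU : s ∈ U := by rw [hU, Finset.mem_filter]; exact ⟨Finset.mem_univ _, hys⟩
        exact (Finset.disjoint_left.1 hdisj hs) hsU
      rw [hFx, hFy]
      decide
    have hbound : T * ∑ S ∈ good, μ S ≤
        ∑ S : Finset Q, (if F S x < F S y then T else 0) * μ S := by
      rw [Finset.mul_sum]
      have hc : ∀ S ∈ good, T * μ S = (if F S x < F S y then T else 0) * μ S := by
        intro S hS
        rw [if_pos (hgoodsep S hS)]
      rw [Finset.sum_congr rfl hc]
      apply Finset.sum_le_sum_of_subset_of_nonneg (Finset.subset_univ good)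
      intro S _ _
      split_ifs
      · exact mul_nonneg hT.le (hμ0 S)
      · rw [zero_mul]
    -- compute the good sum via the bijection S' ↦ insert x S'
    have hgoodsum : ∑ S ∈ good, μ S = p * q ^ U.card := by
      have hbij : ∑ S ∈ good, μ S = ∑ S' ∈ R.powerset, μ (insert x S') := by
        refine Finset.sum_bij' (fun S _ => S.erase x) (fun S' _ => insert x S')
          ?_ ?_ ?_ ?_ ?_
        · intro S hS
          rw [Finset.mem_powerset]
          rw [hgood, Finset.mem_filter] at hS
          intro z hz
          rw [Finset.mem_erase] at hz
          rw [hR, Finset.mem_sdiff]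
          refine ⟨Finset.mem_univ _, ?_⟩
          rw [Finset.mem_insert]
          push_neg
          exact ⟨hz.1, fun hzU => (Finset.disjoint_left.1 hS.2.2 hz.2) hzU⟩
        · intro S' hS'
          rw [Finset.mem_powerset] at hS'
          rw [hgood, Finset.mem_filter]
          refine ⟨Finset.mem_univ _, Finset.mem_insert_self _ _, ?_⟩
          rw [Finset.disjoint_left]
          intro a ha haU
          rw [Finset.mem_insert] at ha
          rcases ha with rfl | ha
          · exact hxU haU
          · have := hS' ha
            rw [hR, Finset.mem_sdiff, Finset.mem_insert] at this
            exact this.2 (Or.inr haU)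
        · intro S hS
          rw [hgood, Finset.mem_filter] at hS
          exact Finset.insert_erase hS.2.1
        · intro S' hS'
          rw [Finset.mem_powerset] at hS'
          apply Finset.erase_insert
          intro hxS'
          exact hxR (hS' hxS')
        · intro S hS
          rw [hgood, Finset.mem_filter] at hS
          rw [Finset.insert_erase hS.2.1]
      rw [hbij]
      have hterm : ∀ S' ∈ R.powerset,
          μ (insert x S') = (p * q ^ U.card) * (p ^ S'.card * q ^ (R.card - S'.card)) := by
        intro S' hS'
        rw [Finset.mem_powerset] at hS'
        have hxS' : x ∉ S' := fun h => hxR (hS' h)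
        have hcle : S'.card ≤ R.card := Finset.card_le_card hS'
        rw [hμ]
        simp only
        rw [Finset.card_insert_of_notMem hxS']
        have he : Fintype.card Q - (S'.card + 1) = U.card + (R.card - S'.card) := by
          omega
        rw [he, pow_add, pow_succ]
        ring
      rw [Finset.sum_congr rfl hterm, ← Finset.mul_sum, sum_powerset_pow R p q, hpq,
        one_pow, mul_one]
    rw [hgoodsum] at hbound
    refine le_trans ?_ hbound
    rw [← hTpq]
    have hqmono : q ^ (υ + 1) ≤ q ^ U.card :=
      pow_le_pow_of_le_one hq.le hq1 hUcard
    have : p * q ^ (υ + 1) ≤ p * q ^ U.card := by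
      apply mul_le_mul_of_nonneg_left hqmono hp.le
    exact mul_le_mul_of_nonneg_left this hT.le
  · -- total sum
    have h8 := sum_transfer (α := Finset Q) (β := Q → Fin 2) F μ (fun _ => T)
    calc (∑ f : Q → Fin 2, T * ∑ S : Finset Q, if F S = f then μ S else 0)
        = ∑ S : Finset Q, T * μ S := h8
      _ = T * ∑ S : Finset Q, μ S := by rw [Finset.mul_sum]
      _ = T := by rw [hμtot, mul_one]

/-- `ftdim₂ P ≤ ftdim₂ (Split P)`, and if every element of `P` is strictly
below at most `υ` others (maximum outdegree `υ`), then `ftdim₂ P ≤ e(υ + 2)`. -/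
theorem ftdim_split_and_outdegree (P : Type*) [PartialOrder P] [Fintype P] [DecidableEq P]
    (υ : ℕ) (hdeg : ∀ x : P, ((Finset.univ : Finset P).filter (fun y => x < y)).card ≤ υ) :
    ftdim 2 P ≤ ftdim 2 (Split P) ∧ ftdim 2 P ≤ Real.exp 1 * ((υ : ℝ) + 2) := by
  constructor
  · -- ftdim 2 P ≤ ftdim 2 (Split P)
    have hne : {s : ℝ | ∃ w : (Split P → Fin 2) → ℝ,
        (∀ f, 0 ≤ w f) ∧ (∀ f, ¬ Monotone f → w f = 0) ∧
        (∀ x y : Split P, ¬ y ≤ x → 1 ≤ ∑ f : Split P → Fin 2, if f x < f y then w f else 0) ∧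
        s = ∑ f : Split P → Fin 2, w f}.Nonempty := by
      obtain ⟨w, hw0, hwm, hcov, htot⟩ := feasible (Split P) (Fintype.card (Split P))
        (fun x => le_trans (Finset.card_filter_le _ _) (le_of_eq Finset.card_univ))
      exact ⟨_, w, hw0, hwm, hcov, htot.symm⟩
    refine le_csInf hne ?_
    rintro s ⟨w, hw0, hwm, hcov, rfl⟩
    apply csInf_le (ftdim_bddBelow P)
    -- transfer w along Tr
    set Tr : (Split P → Fin 2) → (P → Fin 2) :=
      fun f x => if ∃ z : P, z ≤ x ∧ f (Sum.inl z) = 1 then 1 else 0 with hTr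
    have hTrMono : ∀ f, Monotone (Tr f) := by
      intro f a b hab
      simp only [hTr]
      split_ifs with ha hb
      · exact le_refl _
      · exfalso
        obtain ⟨z, hz, hfz⟩ := ha
        exact hb ⟨z, hz.trans hab, hfz⟩
      · exact Fin.zero_le _
      · exact Fin.zero_le _
    have hkey : ∀ f : Split P → Fin 2, Monotone f →
        ∀ x y : P, f (Sum.inr x) < f (Sum.inl y) → Tr f x < Tr f y := by
      intro f hf x y hlt
      rw [fin2_lt_iff] at hlt
      obtain ⟨hfx, hfy⟩ := hlt
      have hTy : Tr f y = 1 := by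
        simp only [hTr]
        rw [if_pos ⟨y, le_refl y, hfy⟩]
      have hTx : Tr f x = 0 := by
        simp only [hTr]
        rw [if_neg]
        rintro ⟨z, hz, hfz⟩
        have hle : @LE.le (Split P) Preorder.toLE (Sum.inl z) (Sum.inr x) := hz
        have := hf hle
        rw [hfz, hfx] at this
        exact absurd this (by decide)
      rw [hTx, hTy]
      decide
    refine ⟨fun g => ∑ f : Split P → Fin 2, if Tr f = g then w f else 0, ?_, ?_, ?_, ?_⟩
    · intro g
      apply Finset.sum_nonneg
      intro f _
      split_ifs
      · exact hw0 f
      · exact le_refl 0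
    · intro g hg
      apply Finset.sum_eq_zero
      intro f _
      rw [if_neg]
      intro h
      exact hg (h ▸ hTrMono f)
    · intro x y hxy
      have hcov' := hcov (Sum.inr x) (Sum.inl y) hxy
      have heq : (∑ g : P → Fin 2, if g x < g y then
          (∑ f : Split P → Fin 2, if Tr f = g then w f else 0) else 0)
          = ∑ f : Split P → Fin 2, (if Tr f x < Tr f y then (1 : ℝ) else 0) * w f := by
        have h7 := sum_transfer (α := Split P → Fin 2) (β := P → Fin 2) Tr w
          (fun g => if g x < g y then (1 : ℝ) else 0)
        rw [← h7]
        apply Finset.sum_congr rfl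
        intro g _
        rw [ite_mul, one_mul, zero_mul]
      rw [heq]
      refine le_trans hcov' (Finset.sum_le_sum ?_)
      intro f _
      by_cases hm : Monotone f
      · split_ifs with h1 h2 h2
        · rw [one_mul]
        · exact absurd (hkey f hm x y h1) h2
        · rw [one_mul]; exact hw0 f
        · rw [zero_mul]
      · rw [hwm f hm]
        split_ifs <;> simp
    · have h8 := sum_transfer (α := Split P → Fin 2) (β := P → Fin 2) Tr w
        (fun _ => (1 : ℝ))
      simp only [one_mul] at h8
      rw [h8]
  · -- ftdim 2 P ≤ e (υ + 2)
    obtain ⟨w, hw0, hwm, hcov, htot⟩ := feasible P υ hdeg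
    have hmem : ((υ : ℝ) + 2) * (1 + 1 / ((υ : ℝ) + 1)) ^ (υ + 1) ∈
        {s : ℝ | ∃ w : (P → Fin 2) → ℝ,
          (∀ f, 0 ≤ w f) ∧ (∀ f, ¬ Monotone f → w f = 0) ∧
          (∀ x y : P, ¬ y ≤ x → 1 ≤ ∑ f : P → Fin 2, if f x < f y then w f else 0) ∧
          s = ∑ f : P → Fin 2, w f} := ⟨w, hw0, hwm, hcov, htot.symm⟩
    refine le_trans (csInf_le (ftdim_bddBelow P) hmem) ?_
    have h1 : ((υ : ℝ) + 1) ≠ 0 := by positivity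
    have hbase : (1 : ℝ) + 1 / ((υ : ℝ) + 1) ≤ Real.exp (1 / ((υ : ℝ) + 1)) := by
      have := Real.add_one_le_exp (1 / ((υ : ℝ) + 1))
      linarith
    have hpow : ((1 : ℝ) + 1 / ((υ : ℝ) + 1)) ^ (υ + 1) ≤ Real.exp 1 := by
      calc ((1 : ℝ) + 1 / ((υ : ℝ) + 1)) ^ (υ + 1)
          ≤ Real.exp (1 / ((υ : ℝ) + 1)) ^ (υ + 1) := by
            apply pow_le_pow_left₀ (by positivity) hbase
        _ = Real.exp ((↑(υ + 1) : ℝ) * (1 / ((υ : ℝ) + 1))) := by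
            rw [Real.exp_nat_mul]
        _ = Real.exp 1 := by
            congr 1
            push_cast
            field_simp
    calc ((υ : ℝ) + 2) * (1 + 1 / ((υ : ℝ) + 1)) ^ (υ + 1)
        ≤ ((υ : ℝ) + 2) * Real.exp 1 := by
          apply mul_le_mul_of_nonneg_left hpow (by positivity)
      _ = Real.exp 1 * ((υ : ℝ) + 2) := mul_comm _ _
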